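/- For every natural number n, lim_{ε→0, ε≠0} ( Γ(-n + ε) - (-1)^n/(n! · ε) ) = (-1)^n ψ(n+1) / n!, where ψ = Γ'/Γ is the digamma function. -/

import Mathlib

open Complex Filter Finset

-- backward recursion
lemma gamma_rec (m : ℕ) (ε : ℂ) (h : ∀ k : ℕ, k ≤ m → ε ≠ k) :
    Complex.Gamma (-(m : ℂ) + ε) * ∏ k ∈ Finset.range (m + 1), (ε - k) = Complex.Gamma (ε + 1) := by
  induction m with
  | zero =>
      simp only [Nat.cast_zero, neg_zero, zero_add, Finset.prod_range_one, sub_zero]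
      rw [Complex.Gamma_add_one ε (by simpa using h 0 le_rfl)]
      ring
  | succ m ih =>
      have h1 : ε - (m + 1 : ℕ) ≠ 0 := sub_ne_zero.mpr (h (m + 1) le_rfl)
      have key : Complex.Gamma (-(m : ℂ) + ε) = (ε - (m + 1 : ℕ)) * Complex.Gamma (-((m : ℕ) + 1 : ℂ) + ε) := by
        have := Complex.Gamma_add_one (-((m : ℕ) + 1 : ℂ) + ε) (by
          intro hc
          apply h1
          push_cast
          rw [sub_eq_zero]
          linear_combination hc)
        rw [show -((m : ℕ) + 1 : ℂ) + ε + 1 = -(m : ℂ) + ε by ring] at this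
        rw [this]
        push_cast
        ring_nf
      have h2 : Complex.Gamma (-(↑(m+1):ℂ) + ε) * (ε - ((m+1:ℕ):ℂ)) = Complex.Gamma (-(m:ℂ) + ε) := by
        rw [key]; push_cast; ring
      have ih' := ih (fun k hk => h k (hk.trans m.le_succ))
      rw [Finset.prod_range_succ]
      linear_combination (∏ k ∈ Finset.range (m+1), (ε - (k:ℂ))) * h2 + ih'

-- forward recursion
lemma gamma_fwd (m : ℕ) (ε : ℂ) (h : ∀ k : ℕ, 1 ≤ k → k ≤ m → ε ≠ k) :
    Complex.Gamma ((m : ℂ) + 1 - ε) = (∏ k ∈ Finset.range m, ((k : ℂ) + 1 - ε)) * Complex.Gamma (1 - ε) := by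
  induction m with
  | zero => simp
  | succ m ih =>
      have h1 : (m : ℂ) + 1 - ε ≠ 0 := by
        intro hc
        exact h (m+1) (by omega) le_rfl (by push_cast; linear_combination -hc)
      have key := Complex.Gamma_add_one ((m : ℂ) + 1 - ε) h1
      push_cast
      rw [show (m : ℂ) + 1 + 1 - ε = ((m : ℂ) + 1 - ε) + 1 by ring, key,
        ih (fun k hk1 hk2 => h k hk1 (hk2.trans m.le_succ)), Finset.prod_range_succ]
      ring

/-- The digamma function `ψ = Γ'/Γ`. -/
noncomputable def digamma (z : ℂ) : ℂ := deriv Complex.Gamma z / Complex.Gamma z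

/-- The constant term in the Laurent expansion of `Γ` at `-n`:
`lim_{ε→0, ε≠0} (Γ(-n+ε) - (-1)^n/(n!·ε)) = (-1)^n ψ(n+1)/n!`. -/
theorem stmt2 (n : ℕ) :
    Filter.Tendsto
      (fun ε : ℂ => Complex.Gamma (-(n : ℂ) + ε) - (-1) ^ n / ((Nat.factorial n : ℂ) * ε))
      (nhdsWithin 0 {0}ᶜ)
      (nhds ((-1) ^ n * _root_.digamma ((n : ℂ) + 1) / (Nat.factorial n : ℂ))) := by
  set h : ℂ → ℂ := fun ε => (-1 : ℂ) ^ n *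
    (Complex.Gamma (1 + ε) * Complex.Gamma (1 - ε) * (Complex.Gamma ((n : ℂ) + 1 - ε))⁻¹) with hh
  have hfact : ((n.factorial : ℂ)) ≠ 0 := Nat.cast_ne_zero.mpr n.factorial_ne_zero
  have hGn : Complex.Gamma ((n : ℂ) + 1) = (n.factorial : ℂ) := Complex.Gamma_nat_eq_factorial n
  have h0 : h 0 = (-1 : ℂ) ^ n * (n.factorial : ℂ)⁻¹ := by
    simp [hh, Complex.Gamma_one, hGn]
  have hne1 : ∀ m : ℕ, (1 : ℂ) ≠ -m := by
    intro m hc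
    have : (1 : ℤ) = -(m : ℤ) := by exact_mod_cast hc
    omega
  have hnen : ∀ m : ℕ, ((n : ℂ) + 1) ≠ -m := by
    intro m hc
    have : ((n : ℤ) + 1) = -(m : ℤ) := by exact_mod_cast hc
    omega
  have hd1 : DifferentiableAt ℂ Complex.Gamma 1 := Complex.differentiableAt_Gamma 1 hne1
  have hdn : DifferentiableAt ℂ Complex.Gamma ((n : ℂ) + 1) :=
    Complex.differentiableAt_Gamma _ hnen
  have hG1 : HasDerivAt (fun ε : ℂ => Complex.Gamma (1 + ε)) (deriv Complex.Gamma 1) 0 := by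
    have e : HasDerivAt Complex.Gamma (deriv Complex.Gamma 1) (1 + (0:ℂ)) := by
      simpa using hd1.hasDerivAt
    simpa [Function.comp_def] using e.comp 0 ((hasDerivAt_id (0:ℂ)).const_add 1)
  have hG2 : HasDerivAt (fun ε : ℂ => Complex.Gamma (1 - ε)) (-(deriv Complex.Gamma 1)) 0 := by
    have e : HasDerivAt Complex.Gamma (deriv Complex.Gamma 1) (1 - (0:ℂ)) := by
      simpa using hd1.hasDerivAt
    simpa [Function.comp_def] using e.comp 0 ((hasDerivAt_id (0:ℂ)).const_sub 1)
  have hGin : HasDerivAt (fun ε : ℂ => Complex.Gamma ((n : ℂ) + 1 - ε))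
      (-(deriv Complex.Gamma ((n : ℂ) + 1))) 0 := by
    have e : HasDerivAt Complex.Gamma (deriv Complex.Gamma ((n : ℂ) + 1)) ((n : ℂ) + 1 - (0:ℂ)) := by
      simpa using hdn.hasDerivAt
    simpa [Function.comp_def] using e.comp 0 ((hasDerivAt_id (0:ℂ)).const_sub ((n : ℂ) + 1))
  have hGnz : Complex.Gamma ((n : ℂ) + 1 - 0) ≠ 0 := by
    rw [sub_zero, hGn]; exact hfact
  have hF : HasDerivAt (fun ε : ℂ => (Complex.Gamma ((n : ℂ) + 1 - ε))⁻¹)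
      (-(-(deriv Complex.Gamma ((n : ℂ) + 1))) / (Complex.Gamma ((n : ℂ) + 1 - 0)) ^ 2) 0 :=
    hGin.inv hGnz
  have hderiv : HasDerivAt h ((-1) ^ n * _root_.digamma ((n : ℂ) + 1) / (Nat.factorial n : ℂ)) 0 := by
    have := ((hG1.mul hG2).mul hF).const_mul ((-1 : ℂ) ^ n)
    refine this.congr_deriv ?_
    simp only [sub_zero, add_zero, Complex.Gamma_one, hGn, _root_.digamma, Pi.mul_apply]
    ring
  have key := hasDerivAt_iff_tendsto_slope.mp hderiv
  refine key.congr' ?_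
  have hball : ∀ᶠ ε : ℂ in nhdsWithin 0 {0}ᶜ, ‖ε‖ < 1 := by
    apply eventually_nhdsWithin_of_eventually_nhds
    have hb : Metric.ball (0:ℂ) 1 ∈ nhds (0:ℂ) := Metric.ball_mem_nhds 0 one_pos
    filter_upwards [hb] with ε hε
    simpa [Metric.mem_ball, dist_eq_norm] using hε
  filter_upwards [hball, self_mem_nhdsWithin] with ε hε hε0
  have hε0' : ε ≠ 0 := hε0
  have hint : ∀ k : ℕ, 1 ≤ k → ε ≠ k := by
    intro k hk hc
    rw [hc, Complex.norm_natCast] at hε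
    have h1k : (1:ℝ) ≤ k := by exact_mod_cast hk
    linarith
  have hk1 : ∀ k : ℕ, k ≤ n → ε ≠ k := by
    intro k _
    rcases Nat.eq_zero_or_pos k with rfl | hk
    · simpa using hε0'
    · exact hint k hk
  have hrec := gamma_rec n ε hk1
  have hfwd := gamma_fwd n ε (fun k hk _ => hint k hk)
  set P : ℂ := ∏ k ∈ Finset.range n, (ε - ((k:ℂ) + 1)) with hP
  have hprod : (∏ k ∈ Finset.range (n+1), (ε - (k:ℂ))) = P * ε := by
    rw [Finset.prod_range_succ']
    push_cast
    simp
    exact Or.inl hP.symm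
  have hQ : (∏ k ∈ Finset.range n, ((k:ℂ) + 1 - ε)) = (-1:ℂ)^n * P := by
    calc (∏ k ∈ Finset.range n, ((k:ℂ) + 1 - ε))
        = ∏ k ∈ Finset.range n, ((-1) * (ε - ((k:ℂ)+1))) :=
          Finset.prod_congr rfl (fun k _ => by ring)
      _ = (-1:ℂ)^n * P := by
          rw [Finset.prod_mul_distrib, Finset.prod_const, Finset.card_range, hP]
  have hPne : P ≠ 0 := by
    rw [hP]
    apply Finset.prod_ne_zero_iff.mpr
    intro k _
    exact sub_ne_zero.mpr (by exact_mod_cast hint (k+1) (by omega))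
  have hG2ne : Complex.Gamma (1 - ε) ≠ 0 := by
    apply Complex.Gamma_ne_zero
    intro m hc
    have hεm : ε = 1 + (m : ℂ) := by linear_combination -hc
    rw [hεm] at hε
    have h2 : ‖(1 : ℂ) + (m:ℂ)‖ = 1 + (m:ℝ) := by
      have := Complex.norm_natCast (1 + m)
      push_cast at this
      exact this
    rw [h2] at hε
    nlinarith [Nat.cast_nonneg (α := ℝ) m]
  rw [hprod] at hrec
  rw [slope_def_field, sub_zero, h0]
  simp only [hh]
  rw [hfwd, hQ]
  rw [show (1:ℂ)+ε = ε+1 from add_comm 1 ε,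
      (eq_div_iff (mul_ne_zero hPne hε0')).mpr hrec]
  have hsq : ((-1:ℂ))^n * (-1)^n = 1 := by
    rw [← pow_add, ← two_mul, pow_mul]; norm_num
  generalize ((-1:ℂ))^n = u at hsq ⊢
  have hu : u ≠ 0 := left_ne_zero_of_mul_eq_one hsq
  rw [mul_inv, mul_inv, inv_eq_of_mul_eq_one_right hsq]
  field_simp
  linear_combination (Complex.Gamma (ε + 1) * (n.factorial : ℂ)) * hsq
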